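/- Let s, t, v₂, v₃ ∈ ℝ² with s ≠ t. Then there exist points w₂, w₃ ∈ ℝ² with dist(s, w₂) = dist(s, v₂), dist(w₂, w₃) = dist(v₂, v₃), dist(w₃, t) = dist(v₃, t), such that the quadrilateral with vertices s, w₂, w₃, t in this cyclic order is convex, in the sense that the four signed areas det(w₂ − s, w₃ − s), det(w₃ − w₂, t − w₂), det(t − w₃, s − w₃), det(s − t, w₂ − t) are either all nonnegative or all nonpositive. -/

import Mathlib

noncomputable section

/-- The Euclidean plane. -/
abbrev E2 := EuclideanSpace ℝ (Fin 2)

/-- The point of `ℝ²` with coordinates `x` and `y`. -/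
def pt (x y : ℝ) : E2 := (WithLp.equiv 2 (Fin 2 → ℝ)).symm ![x, y]

/-- `det(u, v) = u₁v₂ − u₂v₁` for `u, v ∈ ℝ²`. -/
def det2 (u v : E2) : ℝ := u 0 * v 1 - u 1 * v 0

lemma det2_pt (p q p' q' : ℝ) : det2 (pt p q) (pt p' q') = p * q' - q * p' := rfl

lemma add_pt_sub (s : E2) (p q p' q' : ℝ) :
    (s + pt p q) - (s + pt p' q') = pt (p - p') (q - q') := by
  ext i; fin_cases i <;> simp [pt]

lemma dist_add_pt (s : E2) (p q p' q' : ℝ) :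
    dist (s + pt p q) (s + pt p' q') = Real.sqrt ((p - p')^2 + (q - q')^2) := by
  rw [EuclideanSpace.dist_eq, Fin.sum_univ_two]
  simp [pt, Real.dist_eq, sq_abs]

/-- Rotated coordinate embedding of the plane relative to base point `s` and
direction `(a, b)` of norm `d`. -/
def ptr (s : E2) (a b d x y : ℝ) : E2 := s + pt ((a*x - b*y)/d) ((b*x + a*y)/d)

lemma ptr_zero (s : E2) (a b d : ℝ) : ptr s a b d 0 0 = s := by
  ext i; fin_cases i <;> simp [ptr, pt]

lemma ptr_base (s t : E2) (a b d : ℝ) (ht : t = s + pt a b) (hd : d ≠ 0) :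
    ptr s a b d d 0 = t := by
  rw [ht]; unfold ptr
  congr 2 <;> field_simp <;> ring

lemma ptr_dist (s : E2) (a b d : ℝ) (hd : d ≠ 0) (hab : a^2 + b^2 = d^2)
    (x₁ y₁ x₂ y₂ : ℝ) :
    dist (ptr s a b d x₁ y₁) (ptr s a b d x₂ y₂)
      = Real.sqrt ((x₁ - x₂)^2 + (y₁ - y₂)^2) := by
  unfold ptr
  rw [dist_add_pt]
  congr 1
  field_simp
  linear_combination ((x₁ - x₂)^2 + (y₁ - y₂)^2) * hab

lemma ptr_det (s : E2) (a b d : ℝ) (hd : d ≠ 0) (hab : a^2 + b^2 = d^2)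
    (x₁ y₁ x₂ y₂ x₃ y₃ x₄ y₄ : ℝ) :
    det2 (ptr s a b d x₁ y₁ - ptr s a b d x₂ y₂) (ptr s a b d x₃ y₃ - ptr s a b d x₄ y₄)
      = (x₁ - x₂) * (y₃ - y₄) - (y₁ - y₂) * (x₃ - x₄) := by
  unfold ptr
  rw [add_pt_sub, add_pt_sub, det2_pt]
  field_simp
  linear_combination ((x₁ - x₂) * (y₃ - y₄) - (y₁ - y₂) * (x₃ - x₄)) * hab

/-- The purely real-number construction: coordinates of a convex (possibly degenerate)
quadrilateral `(0,0), (X₂,Y₂), (X₃,Y₃), (d,0)` with side lengths `r₂, r, r₃, d`. -/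
lemma coords_exist (d r₂ r r₃ : ℝ) (hd : 0 < d) (hr₂ : 0 ≤ r₂) (hr : 0 ≤ r) (hr₃ : 0 ≤ r₃)
    (h1 : d ≤ r₂ + r + r₃) (h2 : r₂ ≤ d + r + r₃) (h3 : r ≤ r₂ + d + r₃) (h4 : r₃ ≤ r + r₂ + d)
    (h5 : r + r₃ = 0 → r₂ = d) :
    ∃ X₂ Y₂ X₃ Y₃ : ℝ,
      (0 - X₂)^2 + (0 - Y₂)^2 = r₂^2 ∧
      (X₂ - X₃)^2 + (Y₂ - Y₃)^2 = r^2 ∧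
      (X₃ - d)^2 + (Y₃ - 0)^2 = r₃^2 ∧
      (X₂ - 0) * (Y₃ - 0) - (Y₂ - 0) * (X₃ - 0) ≤ 0 ∧
      (X₃ - X₂) * (0 - Y₂) - (Y₃ - Y₂) * (d - X₂) ≤ 0 ∧
      (d - X₃) * (0 - Y₃) - (0 - Y₃) * (0 - X₃) ≤ 0 ∧
      (0 - d) * (Y₂ - 0) - (0 - 0) * (X₂ - d) ≤ 0 := by
  by_cases hdeg : r + r₃ = 0
  · have hr0 : r = 0 := by linarith
    have hr₃0 : r₃ = 0 := by linarith
    have hr₂d : r₂ = d := h5 hdeg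
    exact ⟨d, 0, d, 0, by nlinarith, by nlinarith, by nlinarith, by nlinarith, by nlinarith,
      by nlinarith, by nlinarith⟩
  · have hpos : 0 < r + r₃ := lt_of_le_of_ne (by linarith) (Ne.symm hdeg)
    by_cases hA : r + r₃ ≤ d + r₂
    · -- triangle (d, r₂, r+r₃) with w₃ on the segment from w₂ to t
      obtain ⟨x, hx⟩ : ∃ x : ℝ, 2*d*x = d^2 + r₂^2 - (r+r₃)^2 :=
        ⟨(d^2 + r₂^2 - (r+r₃)^2)/(2*d), by field_simp⟩
      have hf1 : 0 ≤ (r+r₃)^2 - (d-r₂)^2 := by nlinarith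
      have hf2 : 0 ≤ (d+r₂)^2 - (r+r₃)^2 := by nlinarith
      have hx2 : 0 ≤ r₂^2 - x^2 := by nlinarith [mul_nonneg hf1 hf2, mul_pos hd hd]
      obtain ⟨y, hy0, hy⟩ : ∃ y : ℝ, 0 ≤ y ∧ y^2 = r₂^2 - x^2 :=
        ⟨Real.sqrt (r₂^2 - x^2), Real.sqrt_nonneg _, Real.sq_sqrt hx2⟩
      obtain ⟨l, hl0, hl1, hlr⟩ : ∃ l : ℝ, 0 ≤ l ∧ l ≤ 1 ∧ l * (r + r₃) = r :=
        ⟨r / (r + r₃), div_nonneg hr hpos.le, (div_le_one hpos).2 (by linarith),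
          div_mul_cancel₀ r hpos.ne'⟩
      have hl2 : (1 - l) * (r + r₃) = r₃ := by linear_combination -hlr
      have e2 : (d - x)^2 + y^2 = (r + r₃)^2 := by linear_combination hy - hx
      refine ⟨x, y, x + l*(d-x), y - l*y, by linear_combination hy, ?_, ?_, ?_, ?_, ?_, ?_⟩
      · linear_combination l^2 * e2 + (l*(r+r₃) + r) * hlr
      · linear_combination (1-l)^2 * e2 + ((1-l)*(r+r₃) + r₃) * hl2
      · have E : (x - 0) * ((y - l*y) - 0) - (y - 0) * ((x + l*(d-x)) - 0) = -(l*(y*d)) := by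
          ring
        linarith [E, mul_nonneg hl0 (mul_nonneg hy0 hd.le)]
      · have E : ((x + l*(d-x)) - x) * (0 - y) - ((y - l*y) - y) * (d - x) = 0 := by ring
        linarith [E]
      · have E : (d - (x + l*(d-x))) * (0 - (y - l*y)) - (0 - (y - l*y)) * (0 - (x + l*(d-x)))
            = -((1-l)*(y*d)) := by ring
        linarith [E, mul_nonneg (by linarith : (0:ℝ) ≤ 1 - l) (mul_nonneg hy0 hd.le)]
      · have E : (0 - d) * (y - 0) - (0 - 0) * (x - d) = -(d*y) := by ring
        linarith [E, mul_nonneg hd.le hy0]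
    · -- s lies between t and w₂: triangle (d+r₂, r, r₃)
      push_neg at hA
      have he : 0 < d + r₂ := by positivity
      obtain ⟨m, hm⟩ : ∃ m : ℝ, 2*(d+r₂)*m = (d+r₂)^2 + r^2 - r₃^2 :=
        ⟨((d+r₂)^2 + r^2 - r₃^2)/(2*(d+r₂)), by field_simp⟩
      have hf1 : 0 ≤ r₃^2 - (d+r₂-r)^2 := by nlinarith
      have hf2 : 0 ≤ (d+r₂+r)^2 - r₃^2 := by nlinarith
      have hq2 : 0 ≤ r^2 - m^2 := by nlinarith [mul_nonneg hf1 hf2, mul_pos he he]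
      obtain ⟨q, hq0, hq⟩ : ∃ q : ℝ, 0 ≤ q ∧ q^2 = r^2 - m^2 :=
        ⟨Real.sqrt (r^2 - m^2), Real.sqrt_nonneg _, Real.sq_sqrt hq2⟩
      refine ⟨-r₂, 0, m - r₂, q, by ring, by linear_combination hq, by linear_combination hq - hm,
        ?_, ?_, ?_, ?_⟩
      · have E : (-r₂ - 0) * (q - 0) - (0 - 0) * ((m - r₂) - 0) = -(r₂*q) := by ring
        linarith [E, mul_nonneg hr₂ hq0]
      · have E : ((m - r₂) - (-r₂)) * (0 - 0) - (q - 0) * (d - (-r₂)) = -(q*(d+r₂)) := by ring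
        linarith [E, mul_nonneg hq0 he.le]
      · have E : (d - (m - r₂)) * (0 - q) - (0 - q) * (0 - (m - r₂)) = -(q*d) := by ring
        linarith [E, mul_nonneg hq0 hd.le]
      · have E : (0 - d) * ((0:ℝ) - 0) - (0 - 0) * (-r₂ - d) = 0 := by ring
        linarith [E]

/-- Given `s ≠ t` and a (possibly self-crossing) three-edge chain
`s, v₂, v₃, t`, the chain can be re-realized with the same edge lengths so that
`s, w₂, w₃, t` in this cyclic order forms a convex quadrilateral, in the sense that
the four signed areas all have the same (weak) sign. -/
theorem exists_convex_quadrilateral_configuration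
    (s t v₂ v₃ : E2) (hst : s ≠ t) :
    ∃ w₂ w₃ : E2,
      dist s w₂ = dist s v₂ ∧ dist w₂ w₃ = dist v₂ v₃ ∧ dist w₃ t = dist v₃ t ∧
      ((0 ≤ det2 (w₂ - s) (w₃ - s) ∧ 0 ≤ det2 (w₃ - w₂) (t - w₂) ∧
        0 ≤ det2 (t - w₃) (s - w₃) ∧ 0 ≤ det2 (s - t) (w₂ - t)) ∨
       (det2 (w₂ - s) (w₃ - s) ≤ 0 ∧ det2 (w₃ - w₂) (t - w₂) ≤ 0 ∧
        det2 (t - w₃) (s - w₃) ≤ 0 ∧ det2 (s - t) (w₂ - t) ≤ 0)) := by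
  set d := dist s t with hddef
  set r₂ := dist s v₂ with hr₂def
  set r := dist v₂ v₃ with hrdef
  set r₃ := dist v₃ t with hr₃def
  have hd : 0 < d := dist_pos.2 hst
  have hr₂0 : 0 ≤ r₂ := dist_nonneg
  have hr0 : 0 ≤ r := dist_nonneg
  have hr₃0 : 0 ≤ r₃ := dist_nonneg
  have h1 : d ≤ r₂ + r + r₃ := dist_triangle4 s v₂ v₃ t
  have h2 : r₂ ≤ d + r + r₃ := by
    have := dist_triangle4 s t v₃ v₂
    rw [dist_comm t v₃, dist_comm v₃ v₂] at this
    linarith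
  have h3 : r ≤ r₂ + d + r₃ := by
    have := dist_triangle4 v₂ s t v₃
    rw [dist_comm v₂ s, dist_comm t v₃] at this
    linarith
  have h4 : r₃ ≤ r + r₂ + d := by
    have := dist_triangle4 v₃ v₂ s t
    rw [dist_comm v₃ v₂, dist_comm v₂ s] at this
    linarith
  have h5 : r + r₃ = 0 → r₂ = d := by
    intro h
    have hra : r = 0 := le_antisymm (by linarith) hr0
    have hrb : r₃ = 0 := by linarith
    have e23 : v₂ = v₃ := by rwa [hrdef, dist_eq_zero] at hra
    have e3t : v₃ = t := by rwa [hr₃def, dist_eq_zero] at hrb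
    rw [hr₂def, e23, e3t, hddef]
  set a := t 0 - s 0 with hadef
  set b := t 1 - s 1 with hbdef
  have hab : a^2 + b^2 = d^2 := by
    have h := EuclideanSpace.dist_eq s t
    rw [Fin.sum_univ_two, Real.dist_eq, Real.dist_eq] at h
    have h2 : d^2 = |s 0 - t 0|^2 + |s 1 - t 1|^2 := by
      rw [hddef, h]
      exact Real.sq_sqrt (by positivity)
    rw [sq_abs, sq_abs] at h2
    rw [hadef, hbdef]
    linear_combination -h2
  have ht : t = s + pt a b := by
    rw [hadef, hbdef]
    ext i; fin_cases i <;> simp [pt]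
  obtain ⟨X₂, Y₂, X₃, Y₃, g1, g2, g3, D1, D2, D3, D4⟩ :=
    coords_exist d r₂ r r₃ hd hr₂0 hr0 hr₃0 h1 h2 h3 h4 h5
  refine ⟨ptr s a b d X₂ Y₂, ptr s a b d X₃ Y₃, ?_, ?_, ?_, Or.inr ⟨?_, ?_, ?_, ?_⟩⟩
  · have h := ptr_dist s a b d hd.ne' hab 0 0 X₂ Y₂
    rw [ptr_zero] at h
    rw [h, g1, Real.sqrt_sq hr₂0]
  · have h := ptr_dist s a b d hd.ne' hab X₂ Y₂ X₃ Y₃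
    rw [h, g2, Real.sqrt_sq hr0]
  · have h := ptr_dist s a b d hd.ne' hab X₃ Y₃ d 0
    rw [ptr_base s t a b d ht hd.ne'] at h
    rw [h, g3, Real.sqrt_sq hr₃0]
  · have h := ptr_det s a b d hd.ne' hab X₂ Y₂ 0 0 X₃ Y₃ 0 0
    rw [ptr_zero] at h
    rw [h]; exact D1
  · have h := ptr_det s a b d hd.ne' hab X₃ Y₃ X₂ Y₂ d 0 X₂ Y₂
    rw [ptr_base s t a b d ht hd.ne'] at h
    rw [h]; exact D2
  · have h := ptr_det s a b d hd.ne' hab d 0 X₃ Y₃ 0 0 X₃ Y₃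
    rw [ptr_base s t a b d ht hd.ne', ptr_zero] at h
    rw [h]; exact D3
  · have h := ptr_det s a b d hd.ne' hab 0 0 d 0 X₂ Y₂ d 0
    rw [ptr_base s t a b d ht hd.ne', ptr_zero] at h
    rw [h]; exact D4
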